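/- Let n be a positive integer and let f : ℝ^n → ℝ^n be a topical function. Then f has an eigenvector in ℝ^n (i.e. there exist v ∈ ℝ^n and h ∈ ℝ with f(v) = v + h·𝟙) if and only if some orbit {f^k(x) : k ∈ ℕ} of f is bounded in the Hilbert semi-norm; moreover, in that case every orbit of f is bounded in the Hilbert semi-norm. -/

import Mathlib

/-- `⊤(x) = max_i x_i`. -/
noncomputable def topV {n : ℕ} (x : Fin n → ℝ) : ℝ := ⨆ i, x i

/-- `⊥(x) = min_i x_i`. -/
noncomputable def botV {n : ℕ} (x : Fin n → ℝ) : ℝ := ⨅ i, x i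

/-- The Hilbert semi-norm `‖x‖_H = ⊤(x) - ⊥(x)`. -/
noncomputable def hilbertSN {n : ℕ} (x : Fin n → ℝ) : ℝ := topV x - botV x

namespace EigAux

variable {n : ℕ}

lemma le_topV (x : Fin n → ℝ) (i : Fin n) : x i ≤ topV x :=
  le_ciSup (Set.finite_range x).bddAbove i

lemma botV_le (x : Fin n → ℝ) (i : Fin n) : botV x ≤ x i :=
  ciInf_le (Set.finite_range x).bddBelow i

lemma topV_le (hn : 0 < n) {x : Fin n → ℝ} {a : ℝ} (h : ∀ i, x i ≤ a) : topV x ≤ a := by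
  haveI : Nonempty (Fin n) := Fin.pos_iff_nonempty.mp hn
  exact ciSup_le h

lemma le_botV (hn : 0 < n) {x : Fin n → ℝ} {a : ℝ} (h : ∀ i, a ≤ x i) : a ≤ botV x := by
  haveI : Nonempty (Fin n) := Fin.pos_iff_nonempty.mp hn
  exact le_ciInf h

lemma hsn_nonneg (hn : 0 < n) (x : Fin n → ℝ) : 0 ≤ hilbertSN x := by
  have h1 := le_topV x ⟨0, hn⟩
  have h2 := botV_le x ⟨0, hn⟩
  unfold hilbertSN; linarith

lemma hsn_const (hn : 0 < n) (c : ℝ) : hilbertSN (fun _ : Fin n => c) = 0 := by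
  haveI : Nonempty (Fin n) := Fin.pos_iff_nonempty.mp hn
  unfold hilbertSN topV botV
  rw [ciSup_const, ciInf_const]; ring

lemma hsn_add_le (hn : 0 < n) (a b : Fin n → ℝ) :
    hilbertSN (fun i => a i + b i) ≤ hilbertSN a + hilbertSN b := by
  have h1 : topV (fun i => a i + b i) ≤ topV a + topV b :=
    topV_le hn fun i => add_le_add (le_topV a i) (le_topV b i)
  have h2 : botV a + botV b ≤ botV (fun i => a i + b i) :=
    le_botV hn fun i => add_le_add (botV_le a i) (botV_le b i)
  unfold hilbertSN; linarith

lemma hsn_sub_le (hn : 0 < n) (a b : Fin n → ℝ) :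
    hilbertSN (fun i => a i - b i) ≤ hilbertSN a + hilbertSN b := by
  have h1 : topV (fun i => a i - b i) ≤ topV a - botV b :=
    topV_le hn fun i => sub_le_sub (le_topV a i) (botV_le b i)
  have h2 : botV a - topV b ≤ botV (fun i => a i - b i) :=
    le_botV hn fun i => sub_le_sub (botV_le a i) (le_topV b i)
  unfold hilbertSN; linarith

lemma hsn_smul_le (hn : 0 < n) {c : ℝ} (hc : 0 ≤ c) (w : Fin n → ℝ) :
    hilbertSN (fun i => c * w i) ≤ c * hilbertSN w := by
  have h1 : topV (fun i => c * w i) ≤ c * topV w :=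
    topV_le hn fun i => mul_le_mul_of_nonneg_left (le_topV w i) hc
  have h2 : c * botV w ≤ botV (fun i => c * w i) :=
    le_botV hn fun i => mul_le_mul_of_nonneg_left (botV_le w i) hc
  unfold hilbertSN; rw [mul_sub]; linarith

lemma hsn_add_const (hn : 0 < n) (w : Fin n → ℝ) (c : ℝ) :
    hilbertSN (fun i => w i + c) = hilbertSN w := by
  have h1 : topV (fun i => w i + c) = topV w + c := by
    apply le_antisymm
    · exact topV_le hn fun i => add_le_add_left (le_topV w i) c
    · have h : topV w ≤ topV (fun i => w i + c) - c := by
        apply topV_le hn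
        intro i
        have hh : w i + c ≤ topV (fun j => w j + c) := le_topV (fun j => w j + c) i
        linarith
      linarith
  have h2 : botV (fun i => w i + c) = botV w + c := by
    apply le_antisymm
    · have h : botV (fun i => w i + c) - c ≤ botV w := by
        apply le_botV hn
        intro i
        have hh : botV (fun j => w j + c) ≤ w i + c := botV_le (fun j => w j + c) i
        linarith
      linarith
    · exact le_botV hn fun i => add_le_add_left (botV_le w i) c
  unfold hilbertSN; rw [h1, h2]; ring

lemma abs_le_hsn (hn : 0 < n) {w : Fin n → ℝ} {j : Fin n} (hw : w j = 0) (i : Fin n) :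
    |w i| ≤ hilbertSN w := by
  have h1 := le_topV w i
  have h2 := botV_le w i
  have h3 := le_topV w j
  have h4 := botV_le w j
  rw [hw] at h3 h4
  unfold hilbertSN
  rw [abs_le]; constructor <;> linarith

lemma key (hn : 0 < n) (f : (Fin n → ℝ) → (Fin n → ℝ))
    (htop : ∀ (x : Fin n → ℝ) (h : ℝ), f (fun i => x i + h) = fun i => f x i + h)
    (hmono : Monotone f) (u v : Fin n → ℝ) (i : Fin n) :
    f u i - f v i ≤ topV (fun j => u j - v j) := by
  have h1 : u ≤ fun j => v j + topV (fun j => u j - v j) := by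
    rw [Pi.le_def]
    intro j
    have h : u j - v j ≤ topV (fun j => u j - v j) := le_topV (fun j => u j - v j) j
    show u j ≤ v j + topV (fun j => u j - v j)
    linarith
  have h2 := hmono h1
  rw [htop v (topV fun j => u j - v j)] at h2
  have h3 : f u i ≤ f v i + topV (fun j => u j - v j) := h2 i
  linarith

lemma key_bot (hn : 0 < n) (f : (Fin n → ℝ) → (Fin n → ℝ))
    (htop : ∀ (x : Fin n → ℝ) (h : ℝ), f (fun i => x i + h) = fun i => f x i + h)
    (hmono : Monotone f) (u v : Fin n → ℝ) (i : Fin n) :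
    botV (fun j => u j - v j) ≤ f u i - f v i := by
  have h1 : (fun j => v j + botV (fun j => u j - v j)) ≤ u := by
    rw [Pi.le_def]
    intro j
    have h : botV (fun j => u j - v j) ≤ u j - v j := botV_le (fun j => u j - v j) j
    show v j + botV (fun j => u j - v j) ≤ u j
    linarith
  have h2 := hmono h1
  rw [htop v (botV fun j => u j - v j)] at h2
  have h3 : f v i + botV (fun j => u j - v j) ≤ f u i := h2 i
  linarith

lemma dH_nonexp (hn : 0 < n) (f : (Fin n → ℝ) → (Fin n → ℝ))
    (htop : ∀ (x : Fin n → ℝ) (h : ℝ), f (fun i => x i + h) = fun i => f x i + h)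
    (hmono : Monotone f) (u v : Fin n → ℝ) :
    hilbertSN (fun i => f u i - f v i) ≤ hilbertSN (fun i => u i - v i) := by
  have h1 : topV (fun i => f u i - f v i) ≤ topV (fun j => u j - v j) :=
    topV_le hn fun i => key hn f htop hmono u v i
  have h2 : botV (fun j => u j - v j) ≤ botV (fun i => f u i - f v i) :=
    le_botV hn fun i => key_bot hn f htop hmono u v i
  unfold hilbertSN; linarith

lemma dH_nonexp_iter (hn : 0 < n) (f : (Fin n → ℝ) → (Fin n → ℝ))
    (htop : ∀ (x : Fin n → ℝ) (h : ℝ), f (fun i => x i + h) = fun i => f x i + h)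
    (hmono : Monotone f) (u v : Fin n → ℝ) (k : ℕ) :
    hilbertSN (fun i => f^[k] u i - f^[k] v i) ≤ hilbertSN (fun i => u i - v i) := by
  induction k with
  | zero => simp
  | succ k ih =>
    have e : (fun i => f^[k+1] u i - f^[k+1] v i)
        = fun i => f (f^[k] u) i - f (f^[k] v) i := by
      funext i
      rw [Function.iterate_succ_apply', Function.iterate_succ_apply']
    rw [e]
    exact le_trans (dH_nonexp hn f htop hmono _ _) ih

lemma f_cont (hn : 0 < n) (f : (Fin n → ℝ) → (Fin n → ℝ))
    (htop : ∀ (x : Fin n → ℝ) (h : ℝ), f (fun i => x i + h) = fun i => f x i + h)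
    (hmono : Monotone f) : Continuous f := by
  have hl : LipschitzWith 1 f := by
    apply LipschitzWith.of_dist_le_mul
    intro u v
    rw [NNReal.coe_one, one_mul, dist_pi_le_iff dist_nonneg]
    intro i
    rw [Real.dist_eq]
    have h1 := key hn f htop hmono u v i
    have h2 := key hn f htop hmono v u i
    have h3 : topV (fun j => u j - v j) ≤ dist u v := by
      apply topV_le hn
      intro j
      have hd := dist_le_pi_dist u v j
      rw [Real.dist_eq] at hd
      have := le_abs_self (u j - v j)
      linarith
    have h4 : topV (fun j => v j - u j) ≤ dist u v := by
      apply topV_le hn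
      intro j
      have hd := dist_le_pi_dist u v j
      rw [Real.dist_eq] at hd
      have := neg_abs_le (u j - v j)
      linarith
    rw [abs_le]; constructor <;> linarith
  exact hl.continuous

lemma orbit_bound (hn : 0 < n) (f : (Fin n → ℝ) → (Fin n → ℝ))
    (htop : ∀ (x : Fin n → ℝ) (h : ℝ), f (fun i => x i + h) = fun i => f x i + h)
    (hmono : Monotone f) (v : Fin n → ℝ) (h : ℝ) (hv : f v = fun i => v i + h)
    (x : Fin n → ℝ) : ∃ M : ℝ, ∀ k : ℕ, hilbertSN (f^[k] x) ≤ M := by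
  refine ⟨hilbertSN (fun i => x i - v i) + hilbertSN v, fun k => ?_⟩
  have hvk : ∀ k : ℕ, f^[k] v = fun i => v i + (k : ℝ) * h := by
    intro k
    induction k with
    | zero => funext i; simp
    | succ k ih =>
      rw [Function.iterate_succ_apply', ih, htop v ((k : ℝ) * h)]
      funext i
      have hvi : f v i = v i + h := congrFun hv i
      show f v i + (k : ℝ) * h = v i + ((k + 1 : ℕ) : ℝ) * h
      rw [hvi]; push_cast; ring
  have hvsn : hilbertSN (f^[k] v) = hilbertSN v := by
    rw [hvk k]
    exact hsn_add_const hn v ((k : ℝ) * h)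
  have e : f^[k] x = fun i => (f^[k] x i - f^[k] v i) + f^[k] v i := by
    funext i; ring
  rw [e]
  refine le_trans (hsn_add_le hn (fun i => f^[k] x i - f^[k] v i) (f^[k] v)) ?_
  have := dH_nonexp_iter hn f htop hmono x v k
  linarith [hvsn.le]

lemma exists_eigvec (hn : 0 < n) (f : (Fin n → ℝ) → (Fin n → ℝ))
    (htop : ∀ (x : Fin n → ℝ) (h : ℝ), f (fun i => x i + h) = fun i => f x i + h)
    (hmono : Monotone f) (x : Fin n → ℝ) (M : ℝ)
    (hM : ∀ k : ℕ, hilbertSN (f^[k] x) ≤ M) :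
    ∃ (v : Fin n → ℝ) (h : ℝ), f v = fun i => v i + h := by
  have i0 : Fin n := ⟨0, hn⟩
  have hM0 : 0 ≤ M := le_trans (hsn_nonneg hn x) (by simpa using hM 0)
  set g : (Fin n → ℝ) → (Fin n → ℝ) := fun y i => f y i - f y i0 with hgdef
  have hgapp : ∀ (y : Fin n → ℝ) (i : Fin n), g y i = f y i - f y i0 := fun _ _ => rfl
  have hgi0 : ∀ y : Fin n → ℝ, g y i0 = 0 := fun y => sub_self _
  have hginv : ∀ (y : Fin n → ℝ) (c : ℝ), g (fun i => y i + c) = g y := by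
    intro y c
    funext i
    rw [hgapp, hgapp, htop y c]
    show (f y i + c) - (f y i0 + c) = f y i - f y i0
    ring
  have hgne : ∀ u v : Fin n → ℝ,
      hilbertSN (fun i => g u i - g v i) ≤ hilbertSN (fun i => u i - v i) := by
    intro u v
    have e : (fun i => g u i - g v i)
        = fun i => (f u i - f v i) + (-(f u i0 - f v i0)) := by
      funext i; rw [hgapp, hgapp]; ring
    rw [e, hsn_add_const hn (fun i => f u i - f v i) (-(f u i0 - f v i0))]
    exact dH_nonexp hn f htop hmono u v
  set x0 : Fin n → ℝ := fun i => x i - x i0 with hx0def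
  have hx0i0 : x0 i0 = 0 := sub_self _
  have horb : ∀ k : ℕ, g^[k] x0 = fun i => f^[k] x i - f^[k] x i0 := by
    intro k
    induction k with
    | zero => funext i; simp [hx0def]
    | succ k ih =>
      rw [Function.iterate_succ_apply', ih]
      have e : (fun i => f^[k] x i - f^[k] x i0)
          = fun i => f^[k] x i + (-(f^[k] x i0)) := by funext i; ring
      rw [e, hginv (f^[k] x) (-(f^[k] x i0))]
      funext i
      rw [hgapp]
      rw [Function.iterate_succ_apply' f k x]
  have horbsn : ∀ k : ℕ, hilbertSN (g^[k] x0) ≤ M := by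
    intro k
    rw [horb k]
    have e : (fun i => f^[k] x i - f^[k] x i0)
        = fun i => f^[k] x i + (-(f^[k] x i0)) := by funext i; ring
    rw [e, hsn_add_const hn (f^[k] x) (-(f^[k] x i0))]
    exact hM k
  have horbi0 : ∀ k : ℕ, g^[k] x0 i0 = 0 := by
    intro k
    rw [horb k]
    exact sub_self _
  have hsnx0 : hilbertSN x0 ≤ M := by
    have := horbsn 0
    simpa using this
  -- approximate fixed points
  have happrox : ∀ δ : ℝ, 0 < δ → ∃ y : Fin n → ℝ,
      (∀ i, |y i| ≤ 3 * M) ∧ (∀ i, |g y i - y i| ≤ δ) := by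
    intro δ hδ
    set ε : ℝ := δ / (12 * M + 2 * δ) with hεdef
    have hden : 0 < 12 * M + 2 * δ := by linarith
    have hε0 : 0 < ε := div_pos hδ hden
    have hε1 : ε < 1 := by rw [hεdef, div_lt_one hden]; linarith
    set G : (Fin n → ℝ) → (Fin n → ℝ) := fun y i => (1 - ε) * g y i + ε * x0 i with hGdef
    have hGapp : ∀ (y : Fin n → ℝ) (i : Fin n),
        G y i = (1 - ε) * g y i + ε * x0 i := fun _ _ => rfl
    set z : ℕ → (Fin n → ℝ) := fun m => G^[m] x0 with hzdef
    have hz0 : z 0 = x0 := rfl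
    have hzsucc : ∀ m : ℕ, z (m + 1) = G (z m) := fun m => Function.iterate_succ_apply' G m x0
    have hzi0 : ∀ m : ℕ, z m i0 = 0 := by
      intro m
      cases m with
      | zero => exact hx0i0
      | succ m =>
        rw [hzsucc m, hGapp, hgi0, hx0i0]; ring
    have hznear : ∀ m : ℕ, hilbertSN (fun i => z m i - g^[m] x0 i) ≤ 2 * M := by
      intro m
      induction m with
      | zero =>
        have e : (fun i => z 0 i - g^[0] x0 i) = fun _ : Fin n => (0 : ℝ) := by
          funext i
          show x0 i - x0 i = 0
          ring
        rw [e, hsn_const hn 0]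
        linarith
      | succ m ih =>
        have e : (fun i => z (m+1) i - g^[m+1] x0 i)
            = fun i => (1 - ε) * (g (z m) i - g (g^[m] x0) i)
                + ε * (x0 i - g (g^[m] x0) i) := by
          funext i
          rw [hzsucc m, hGapp, Function.iterate_succ_apply' g m x0]
          ring
        rw [e]
        have h1 := hsn_add_le hn (fun i => (1 - ε) * (g (z m) i - g (g^[m] x0) i))
          (fun i => ε * (x0 i - g (g^[m] x0) i))
        have h2 := hsn_smul_le hn (show (0:ℝ) ≤ 1 - ε by linarith)
          (fun i => g (z m) i - g (g^[m] x0) i)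
        have h3 := hsn_smul_le hn hε0.le (fun i => x0 i - g (g^[m] x0) i)
        have h4 := hgne (z m) (g^[m] x0)
        have h6 := hsn_sub_le hn x0 (g (g^[m] x0))
        have h7 : hilbertSN (g (g^[m] x0)) ≤ M := by
          rw [← Function.iterate_succ_apply' g m x0]
          exact horbsn (m+1)
        have hA : (1 - ε) * hilbertSN (fun i => g (z m) i - g (g^[m] x0) i)
            ≤ (1 - ε) * (2 * M) :=
          mul_le_mul_of_nonneg_left (le_trans h4 ih) (by linarith)
        have hB : ε * hilbertSN (fun i => x0 i - g (g^[m] x0) i) ≤ ε * (2 * M) :=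
          mul_le_mul_of_nonneg_left (by linarith) hε0.le
        have hsum : (1 - ε) * (2 * M) + ε * (2 * M) = 2 * M := by ring
        linarith
    have hzsn : ∀ m : ℕ, hilbertSN (z m) ≤ 3 * M := by
      intro m
      have e : z m = fun i => (z m i - g^[m] x0 i) + g^[m] x0 i := by funext i; ring
      rw [e]
      refine le_trans (hsn_add_le hn (fun i => z m i - g^[m] x0 i) (g^[m] x0)) ?_
      linarith [hznear m, horbsn m]
    have hzabs : ∀ (m : ℕ) (i : Fin n), |z m i| ≤ 3 * M := fun m i =>
      le_trans (abs_le_hsn hn (hzi0 m) i) (hzsn m)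
    have hgzsn : ∀ m : ℕ, hilbertSN (g (z m)) ≤ 5 * M := by
      intro m
      have e : g (z m) = fun i => (g (z m) i - g x0 i) + g x0 i := by funext i; ring
      rw [e]
      refine le_trans (hsn_add_le hn (fun i => g (z m) i - g x0 i) (g x0)) ?_
      have h1 := hgne (z m) x0
      have h2 := hsn_sub_le hn (z m) x0
      have h3 : hilbertSN (g x0) ≤ M := by
        have := horbsn 1
        rwa [Function.iterate_one] at this
      linarith [hzsn m, hsnx0]
    have hcontr : ∀ m : ℕ,
        hilbertSN (fun i => z (m+1) i - z m i) ≤ (1 - ε)^m * (6 * M) := by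
      intro m
      induction m with
      | zero =>
        have h := hsn_sub_le hn (z 1) (z 0)
        have := hzsn 1
        have := hzsn 0
        rw [pow_zero, one_mul]
        linarith
      | succ m ih =>
        have e : (fun i => z (m+1+1) i - z (m+1) i)
            = fun i => (1 - ε) * (g (z (m+1)) i - g (z m) i) := by
          funext i
          rw [hzsucc (m+1), hzsucc m, hGapp, hGapp]
          ring
        rw [e]
        refine le_trans (hsn_smul_le hn (show (0:ℝ) ≤ 1 - ε by linarith) _) ?_
        have h1 := le_trans (hgne (z (m+1)) (z m)) ih
        have h2 : (1 - ε) * hilbertSN (fun i => g (z (m+1)) i - g (z m) i)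
            ≤ (1 - ε) * ((1 - ε)^m * (6 * M)) :=
          mul_le_mul_of_nonneg_left h1 (by linarith)
        have h3 : (1 - ε) * ((1 - ε)^m * (6 * M)) = (1 - ε)^(m+1) * (6 * M) := by ring
        linarith
    have hε6 : ε * (6 * M) ≤ δ / 2 := by
      rw [hεdef, div_mul_eq_mul_div, div_le_div_iff₀ hden two_pos]
      nlinarith
    obtain ⟨m, hm⟩ := exists_pow_lt_of_lt_one
      (show (0:ℝ) < δ / (12 * M + 2) by positivity) (show 1 - ε < 1 by linarith)
    have hpow : (1 - ε)^m * (6 * M) ≤ δ / 2 := by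
      have h1 : (1 - ε)^m * (6 * M) ≤ (δ / (12 * M + 2)) * (6 * M) :=
        mul_le_mul_of_nonneg_right hm.le (by linarith)
      have h2 : (δ / (12 * M + 2)) * (6 * M) ≤ δ / 2 := by
        rw [div_mul_eq_mul_div, div_le_div_iff₀ (by linarith) two_pos]
        nlinarith
      linarith
    refine ⟨z m, fun i => hzabs m i, fun i => ?_⟩
    have hid : g (z m) i - z m i = (z (m+1) i - z m i) + ε * (g (z m) i - x0 i) := by
      rw [hzsucc m, hGapp]
      ring
    have h1 : |z (m+1) i - z m i| ≤ δ / 2 := by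
      have hw : (fun j => z (m+1) j - z m j) i0 = 0 := by
        show z (m+1) i0 - z m i0 = 0
        rw [hzi0, hzi0]; ring
      have := abs_le_hsn (w := fun j => z (m+1) j - z m j) (j := i0) hn hw i
      exact le_trans (le_trans this (hcontr m)) hpow
    have h2 : |g (z m) i - x0 i| ≤ 6 * M := by
      have ha : |g (z m) i| ≤ 5 * M := le_trans (abs_le_hsn hn (hgi0 (z m)) i) (hgzsn m)
      have hb : |x0 i| ≤ M := le_trans (abs_le_hsn hn hx0i0 i) hsnx0
      have hc := abs_add_le (g (z m) i) (-(x0 i))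
      rw [abs_neg] at hc
      have he : g (z m) i - x0 i = g (z m) i + (-(x0 i)) := by ring
      rw [he]
      linarith
    have h3 : ε * |g (z m) i - x0 i| ≤ ε * (6 * M) :=
      mul_le_mul_of_nonneg_left h2 hε0.le
    calc |g (z m) i - z m i|
        ≤ |z (m+1) i - z m i| + |ε * (g (z m) i - x0 i)| := by rw [hid]; exact abs_add_le _ _
      _ = |z (m+1) i - z m i| + ε * |g (z m) i - x0 i| := by
          rw [abs_mul, abs_of_pos hε0]
      _ ≤ δ / 2 + δ / 2 := by linarith
      _ = δ := by ring
  -- compactness argument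
  have hfc : Continuous f := f_cont hn f htop hmono
  have hgc : Continuous g := by
    apply continuous_pi
    intro i
    exact ((continuous_apply i).comp hfc).sub ((continuous_apply i0).comp hfc)
  have hKc : IsCompact (Set.univ.pi fun _ : Fin n => Set.Icc (-(3*M)) (3*M)) :=
    isCompact_univ_pi fun _ => isCompact_Icc
  have hKne : (Set.univ.pi fun _ : Fin n => Set.Icc (-(3*M)) (3*M)).Nonempty :=
    ⟨fun _ => 0, fun i _ => Set.mem_Icc.mpr
      ⟨by show -(3*M) ≤ (0:ℝ); linarith, by show (0:ℝ) ≤ 3*M; linarith⟩⟩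
  obtain ⟨y, hyK, hymin⟩ := hKc.exists_isMinOn hKne
    ((hgc.dist continuous_id).continuousOn)
  have hy : g y = y := by
    have hd0 : dist (g y) y ≤ 0 := by
      by_contra hc
      push_neg at hc
      obtain ⟨w, hw1, hw2⟩ := happrox (dist (g y) y / 2) (by linarith)
      have hwK : w ∈ Set.univ.pi fun _ : Fin n => Set.Icc (-(3*M)) (3*M) := by
        intro i _
        exact Set.mem_Icc.mpr (abs_le.mp (hw1 i))
      have hdw : dist (g w) w ≤ dist (g y) y / 2 := by
        rw [dist_pi_le_iff (by linarith)]
        intro i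
        rw [Real.dist_eq]
        exact hw2 i
      have hmin := isMinOn_iff.mp hymin w hwK
      simp only [id_eq] at hmin
      linarith
    have hdz : dist (g y) y = 0 := le_antisymm hd0 dist_nonneg
    exact dist_eq_zero.mp hdz
  refine ⟨y, f y i0, funext fun i => ?_⟩
  have h2 : f y i - f y i0 = y i := congrFun hy i
  show f y i = y i + f y i0
  linarith

end EigAux


theorem eigenvector_iff_bounded_orbit_additive
    (n : ℕ) (hn : 0 < n) (f : (Fin n → ℝ) → (Fin n → ℝ))
    (htop : ∀ (x : Fin n → ℝ) (h : ℝ), f (fun i => x i + h) = fun i => f x i + h)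
    (hmono : Monotone f) :
    ((∃ (v : Fin n → ℝ) (h : ℝ), f v = fun i => v i + h) ↔
      ∃ x : Fin n → ℝ, ∃ M : ℝ, ∀ k : ℕ, hilbertSN (f^[k] x) ≤ M) ∧
    ((∃ (v : Fin n → ℝ) (h : ℝ), f v = fun i => v i + h) →
      ∀ x : Fin n → ℝ, ∃ M : ℝ, ∀ k : ℕ, hilbertSN (f^[k] x) ≤ M) := by
  constructor
  · constructor
    · rintro ⟨v, h, hv⟩
      obtain ⟨M, hM⟩ := EigAux.orbit_bound hn f htop hmono v h hv v
      exact ⟨v, M, hM⟩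
    · rintro ⟨x, M, hM⟩
      exact EigAux.exists_eigvec hn f htop hmono x M hM
  · rintro ⟨v, h, hv⟩ x
    exact EigAux.orbit_bound hn f htop hmono v h hv x
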